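/- arXiv:2206.03315 — 3 statements merged into one kernel-verified Lean document; each statement's English description precedes it below -/
import Mathlib

section
/- If a permutation code C ⊆ S_n has minimum Hamming distance at least d, then for any two distinct codewords π, σ ∈ C, any subsets I, J ⊆ {1,...,n} of rows and columns with |I| + |J| = e, the matrices Y^π and Y^σ restricted to rows outside I and columns outside J have Hamming distance at least 2d − 2e. -/
/-- The permutation matrix of `π` (entry `(i, j)` is `1` iff `π j = i`). -/
def Ymat (n : ℕ) (π : Equiv.Perm (Fin n)) : Fin n × Fin n → Bool :=
  fun p => decide (π p.2 = p.1)

lemma mem_S_iff {n : ℕ} (π σ : Equiv.Perm (Fin n)) (p : Fin n × Fin n) :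
    Ymat n π p ≠ Ymat n σ p ↔ π p.2 ≠ σ p.2 ∧ (p.1 = π p.2 ∨ p.1 = σ p.2) := by
  simp only [Ymat, ne_eq, decide_eq_decide]
  constructor
  · intro h
    have h1 : π p.2 ≠ σ p.2 := fun heq => h (by rw [heq])
    refine ⟨h1, ?_⟩
    by_cases h2 : π p.2 = p.1
    · exact Or.inl h2.symm
    · have h3 : σ p.2 = p.1 := by tauto
      exact Or.inr h3.symm
  · rintro ⟨h, h1 | h1⟩ <;> intro hiff
    · exact h (((hiff.1 h1.symm).trans h1).symm)
    · exact h ((hiff.2 h1.symm).trans h1)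

lemma S_card {n : ℕ} (π σ : Equiv.Perm (Fin n)) :
    (Finset.univ.filter (fun p : Fin n × Fin n => Ymat n π p ≠ Ymat n σ p)).card
      = 2 * hammingDist ⇑π ⇑σ := by
  have hS : (Finset.univ.filter (fun p : Fin n × Fin n => Ymat n π p ≠ Ymat n σ p))
      = (Finset.univ.filter fun j => π j ≠ σ j).biUnion
          (fun j => {(π j, j), (σ j, j)}) := by
    ext ⟨i, j⟩
    simp only [Finset.mem_filter, Finset.mem_univ, true_and, Finset.mem_biUnion,
      Finset.mem_insert, Finset.mem_singleton, mem_S_iff, Prod.mk.injEq]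
    constructor
    · rintro ⟨h, h1 | h1⟩ <;> exact ⟨j, h, by tauto⟩
    · rintro ⟨j', h, ⟨h1, h2⟩ | ⟨h1, h2⟩⟩ <;> subst h2 <;> tauto
  rw [hS, Finset.card_biUnion]
  · rw [Finset.sum_congr rfl (g := fun _ => 2), Finset.sum_const, hammingDist,
      smul_eq_mul, mul_comm]
    intro j hj
    simp only [Finset.mem_filter] at hj
    rw [Finset.card_insert_of_notMem, Finset.card_singleton]
    simp only [Finset.mem_singleton, Prod.mk.injEq, not_and]
    intro h; exact absurd h hj.2
  · intro a _ b _ hab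
    simp only [Finset.disjoint_left]
    rintro ⟨i, j⟩ h1 h2
    simp only [Finset.mem_insert, Finset.mem_singleton, Prod.mk.injEq] at h1 h2
    rcases h1 with ⟨_, rfl⟩ | ⟨_, rfl⟩ <;> rcases h2 with ⟨_, h⟩ | ⟨_, h⟩ <;> exact hab h

/-- If a permutation code has minimum Hamming distance at least `d`, then for distinct
codewords `π, σ` and any deleted row set `I` and column set `J` with `|I| + |J| = e`,
the permutation matrices restricted to the remaining rows and columns are at Hamming
distance at least `2d - 2e`. -/
theorem stmt1 (n d e : ℕ) (C : Set (Equiv.Perm (Fin n)))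
    (hC : ∀ π ∈ C, ∀ σ ∈ C, π ≠ σ → d ≤ hammingDist ⇑π ⇑σ)
    (π σ : Equiv.Perm (Fin n)) (hπ : π ∈ C) (hσ : σ ∈ C) (hne : π ≠ σ)
    (I J : Finset (Fin n)) (he : I.card + J.card = e) :
    2 * d - 2 * e ≤
      (Finset.univ.filter (fun p : Fin n × Fin n =>
        p.1 ∉ I ∧ p.2 ∉ J ∧ Ymat n π p ≠ Ymat n σ p)).card := by
  classical
  set S := Finset.univ.filter (fun p : Fin n × Fin n => Ymat n π p ≠ Ymat n σ p) with hSdef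
  set T := Finset.univ.filter (fun p : Fin n × Fin n =>
      p.1 ∉ I ∧ p.2 ∉ J ∧ Ymat n π p ≠ Ymat n σ p) with hTdef
  have hd : 2 * d ≤ S.card := by
    rw [S_card]; exact Nat.mul_le_mul_left 2 (hC π hπ σ hσ hne)
  set R := I.biUnion (fun i => ({(i, π.symm i), (i, σ.symm i)} : Finset (Fin n × Fin n)))
    with hRdef
  set Q := J.biUnion (fun j => ({(π j, j), (σ j, j)} : Finset (Fin n × Fin n))) with hQdef
  have hRc : R.card ≤ 2 * I.card := by
    refine le_trans (Finset.card_biUnion_le) ?_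
    rw [mul_comm]
    refine le_trans (Finset.sum_le_sum (fun i _ => ?_)) (by rw [Finset.sum_const, smul_eq_mul])
    exact le_trans (Finset.card_insert_le _ _) (by simp)
  have hQc : Q.card ≤ 2 * J.card := by
    refine le_trans (Finset.card_biUnion_le) ?_
    rw [mul_comm]
    refine le_trans (Finset.sum_le_sum (fun i _ => ?_)) (by rw [Finset.sum_const, smul_eq_mul])
    exact le_trans (Finset.card_insert_le _ _) (by simp)
  have hsub : S ⊆ T ∪ R ∪ Q := by
    rintro ⟨i, j⟩ hp
    simp only [hSdef, Finset.mem_filter, Finset.mem_univ, true_and] at hp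
    have hp' := (mem_S_iff π σ (i, j)).1 hp
    simp only [Finset.mem_union, hTdef, hRdef, hQdef, Finset.mem_filter, Finset.mem_univ,
      true_and, Finset.mem_biUnion, Finset.mem_insert, Finset.mem_singleton]
    by_cases hi : i ∈ I
    · refine Or.inl (Or.inr ⟨i, hi, ?_⟩)
      rcases hp'.2 with h | h
      · exact Or.inl (Prod.ext rfl ((π.eq_symm_apply).2 h.symm))
      · exact Or.inr (Prod.ext rfl ((σ.eq_symm_apply).2 h.symm))
    by_cases hj : j ∈ J
    · refine Or.inr ⟨j, hj, ?_⟩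
      rcases hp'.2 with h | h
      · exact Or.inl (Prod.ext h rfl)
      · exact Or.inr (Prod.ext h rfl)
    · exact Or.inl (Or.inl ⟨hi, hj, hp⟩)
  have := Finset.card_le_card hsub
  have hcard : (T ∪ R ∪ Q).card ≤ T.card + R.card + Q.card :=
    le_trans (Finset.card_union_le _ _) (by
      have := Finset.card_union_le T R; omega)
  omega
end

section
/- A permutation code C ⊆ S_n with minimum Hamming distance d can correct any pattern of e_1 background-noise bit flips, e_2 impulse-noise columns, and e_3 frequency-disturbance rows in the transmitted permutation matrix, provided e_1 + e_2 + e_3 ≤ d − 1: the codeword is uniquely determined by the corrupted matrix. -/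
/-- Corrupt a matrix `M`: flip the entries in `E` (background noise), set the rows in `R`
to all ones (permanent frequency disturbance) and the columns in `Cc` to all ones
(impulse noise). -/
def corrupt {n : ℕ} (M : Fin n × Fin n → Bool) (E : Finset (Fin n × Fin n))
    (R Cc : Finset (Fin n)) : Fin n × Fin n → Bool :=
  fun p => if p.1 ∈ R ∨ p.2 ∈ Cc then true else xor (M p) (decide (p ∈ E))

/-- Counting helper: the columns whose `π`-point lies in `E` plus those whose `σ`-point
lies in `E` are at most `E.card`, when `π` and `σ` disagree on all of `A`. -/
lemma pair_count {n : ℕ} (π σ : Equiv.Perm (Fin n)) (A : Finset (Fin n))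
    (hA : ∀ j ∈ A, π j ≠ σ j) (E : Finset (Fin n × Fin n)) :
    (A.filter fun j => ((π j, j) : Fin n × Fin n) ∈ E).card
      + (A.filter fun j => ((σ j, j) : Fin n × Fin n) ∈ E).card ≤ E.card := by
  classical
  set A1 := A.filter fun j => ((π j, j) : Fin n × Fin n) ∈ E with hA1
  set B1 := A.filter fun j => ((σ j, j) : Fin n × Fin n) ∈ E with hB1
  have hinjπ : Function.Injective (fun j : Fin n => ((π j, j) : Fin n × Fin n)) :=
    fun a b h => congrArg Prod.snd h
  have hinjσ : Function.Injective (fun j : Fin n => ((σ j, j) : Fin n × Fin n)) :=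
    fun a b h => congrArg Prod.snd h
  set S := A1.image (fun j : Fin n => ((π j, j) : Fin n × Fin n)) with hS
  set T := B1.image (fun j : Fin n => ((σ j, j) : Fin n × Fin n)) with hT
  have hScard : S.card = A1.card := Finset.card_image_of_injective _ hinjπ
  have hTcard : T.card = B1.card := Finset.card_image_of_injective _ hinjσ
  have hdisj : Disjoint S T := by
    rw [Finset.disjoint_left]
    rintro x hxS hxT
    obtain ⟨a, ha, rfl⟩ := Finset.mem_image.mp hxS
    obtain ⟨b, hb, hab⟩ := Finset.mem_image.mp hxT
    have hba : b = a := congrArg Prod.snd hab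
    subst hba
    have : σ b = π b := congrArg Prod.fst hab
    exact hA b (Finset.mem_filter.mp hb).1 this.symm
  have hsub : S ∪ T ⊆ E := by
    intro x hx
    rcases Finset.mem_union.mp hx with h | h
    · obtain ⟨a, ha, rfl⟩ := Finset.mem_image.mp h
      exact (Finset.mem_filter.mp ha).2
    · obtain ⟨a, ha, rfl⟩ := Finset.mem_image.mp h
      exact (Finset.mem_filter.mp ha).2
  calc A1.card + B1.card = S.card + T.card := by rw [hScard, hTcard]
    _ = (S ∪ T).card := (Finset.card_union_of_disjoint hdisj).symm
    _ ≤ E.card := Finset.card_le_card hsub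

lemma row_count {n : ℕ} (π : Equiv.Perm (Fin n)) (A R : Finset (Fin n)) :
    (A.filter fun j => π j ∈ R).card ≤ R.card := by
  classical
  apply Finset.card_le_card_of_injOn (fun j => π j)
  · intro j hj; exact (Finset.mem_filter.mp hj).2
  · exact fun a _ b _ h => π.injective h

/-- A permutation code of minimum Hamming distance `d` corrects any combination of `e₁`
background-noise flips, `e₂` impulse-noise columns and `e₃` frequency-disturbance rows
with `e₁ + e₂ + e₃ ≤ d - 1`: two distinct codewords can never produce the same corrupted
matrix under noise patterns within this budget. -/
theorem stmt10 (n d : ℕ) (C : Set (Equiv.Perm (Fin n)))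
    (hC : ∀ π ∈ C, ∀ σ ∈ C, π ≠ σ → d ≤ hammingDist ⇑π ⇑σ)
    (π σ : Equiv.Perm (Fin n)) (hπ : π ∈ C) (hσ : σ ∈ C) (hne : π ≠ σ)
    (E₁ E₂ : Finset (Fin n × Fin n)) (C₁ C₂ R₁ R₂ : Finset (Fin n))
    (h1 : E₁.card + C₁.card + R₁.card ≤ d - 1)
    (h2 : E₂.card + C₂.card + R₂.card ≤ d - 1) :
    corrupt (Ymat n π) E₁ R₁ C₁ ≠ corrupt (Ymat n σ) E₂ R₂ C₂ := by
  classical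
  intro heq
  set A : Finset (Fin n) := Finset.univ.filter (fun j => π j ≠ σ j) with hAdef
  have hmemA : ∀ j, j ∈ A ↔ π j ≠ σ j := by
    intro j; simp [hAdef]
  have hd : d ≤ A.card := by
    have := hC π hπ σ hσ hne
    simpa [hammingDist, hAdef] using this
  have hA1 : 1 ≤ A.card := by
    have hfne : ⇑π ≠ ⇑σ := fun h => hne (Equiv.coe_fn_injective h)
    obtain ⟨j, hj⟩ := Function.ne_iff.mp hfne
    exact Finset.card_pos.mpr ⟨j, (hmemA j).mpr hj⟩
  have hAne : ∀ j ∈ A, π j ≠ σ j := fun j hj => (hmemA j).mp hj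
  -- Condition from the point (π j, j)
  have hcond1 : ∀ j ∈ A, ((π j, j) : Fin n × Fin n) ∈ E₁ ∨
      ((π j, j) : Fin n × Fin n) ∈ E₂ ∨ π j ∈ R₂ ∨ j ∈ C₂ := by
    intro j hj
    have hjne : σ j ≠ π j := (hAne j hj).symm
    by_contra hc
    push_neg at hc
    obtain ⟨hc1, hc2, hc3, hc4⟩ := hc
    have h := congrFun heq (π j, j)
    simp [corrupt, Ymat, hc1, hc2, hc3, hc4, hjne] at h
  -- Condition from the point (σ j, j)
  have hcond2 : ∀ j ∈ A, ((σ j, j) : Fin n × Fin n) ∈ E₁ ∨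
      ((σ j, j) : Fin n × Fin n) ∈ E₂ ∨ σ j ∈ R₁ ∨ j ∈ C₁ := by
    intro j hj
    have hjne : π j ≠ σ j := hAne j hj
    by_contra hc
    push_neg at hc
    obtain ⟨hc1, hc2, hc3, hc4⟩ := hc
    have h := congrFun heq (σ j, j)
    simp [corrupt, Ymat, hc1, hc2, hc3, hc4, hjne] at h
  -- split A by the four disjuncts, twice
  have hsplit : ∀ (P1 P2 P3 P4 : Fin n → Prop) [DecidablePred P1] [DecidablePred P2]
      [DecidablePred P3] [DecidablePred P4],
      (∀ j ∈ A, P1 j ∨ P2 j ∨ P3 j ∨ P4 j) →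
      A.card ≤ (A.filter P1).card + (A.filter P2).card + (A.filter P3).card
        + (A.filter P4).card := by
    intro P1 P2 P3 P4 _ _ _ _ hall
    have hsub : A ⊆ A.filter P1 ∪ A.filter P2 ∪ A.filter P3 ∪ A.filter P4 := by
      intro j hj
      rcases hall j hj with h | h | h | h
      · exact Finset.mem_union_left _ (Finset.mem_union_left _
          (Finset.mem_union_left _ (Finset.mem_filter.mpr ⟨hj, h⟩)))
      · exact Finset.mem_union_left _ (Finset.mem_union_left _
          (Finset.mem_union_right _ (Finset.mem_filter.mpr ⟨hj, h⟩)))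
      · exact Finset.mem_union_left _ (Finset.mem_union_right _
          (Finset.mem_filter.mpr ⟨hj, h⟩))
      · exact Finset.mem_union_right _ (Finset.mem_filter.mpr ⟨hj, h⟩)
    calc A.card ≤ (A.filter P1 ∪ A.filter P2 ∪ A.filter P3 ∪ A.filter P4).card :=
          Finset.card_le_card hsub
      _ ≤ _ := by
          refine le_trans (Finset.card_union_le _ _) ?_
          refine Nat.add_le_add_right ?_ _
          refine le_trans (Finset.card_union_le _ _) ?_
          exact Nat.add_le_add_right (Finset.card_union_le _ _) _
  have hb1 : A.card ≤ (A.filter fun j => ((π j, j) : Fin n × Fin n) ∈ E₁).card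
      + (A.filter fun j => ((π j, j) : Fin n × Fin n) ∈ E₂).card
      + (A.filter fun j => π j ∈ R₂).card + (A.filter fun j => j ∈ C₂).card :=
    hsplit _ _ _ _ hcond1
  have hb2 : A.card ≤ (A.filter fun j => ((σ j, j) : Fin n × Fin n) ∈ E₁).card
      + (A.filter fun j => ((σ j, j) : Fin n × Fin n) ∈ E₂).card
      + (A.filter fun j => σ j ∈ R₁).card + (A.filter fun j => j ∈ C₁).card :=
    hsplit _ _ _ _ hcond2
  have hE1 := pair_count π σ A hAne E₁
  have hE2 := pair_count π σ A hAne E₂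
  have hR2 := row_count π A R₂
  have hR1 := row_count σ A R₁
  have hC2 : (A.filter fun j => j ∈ C₂).card ≤ C₂.card :=
    Finset.card_le_card (fun j hj => (Finset.mem_filter.mp hj).2)
  have hC1 : (A.filter fun j => j ∈ C₁).card ≤ C₁.card :=
    Finset.card_le_card (fun j hj => (Finset.mem_filter.mp hj).2)
  omega
end

section
/- The code C_n^e of even permutations in the Tenengolts code C_n has minimum Hamming distance at least 3 (for |C_n^e| ≥ 2). -/
/-- The descent-indicator vector of a permutation `π` of `{1, …, n}`:
`α(π)_i = 1` iff the entry at position `i + 1` is at least the entry at position `i`. -/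
def alphaVec {n : ℕ} (π : Equiv.Perm (Fin n)) : Fin (n - 1) → Bool :=
  fun i => decide (π ⟨i.val, by have := i.isLt; omega⟩ ≤ π ⟨i.val + 1, by have := i.isLt; omega⟩)

/-- The Tenengolts checksum `Σ_{i=1}^{n-1} i · α(π)_i` of a permutation `π`. -/
def tSum {n : ℕ} (π : Equiv.Perm (Fin n)) : ℕ :=
  ∑ i : Fin (n - 1), (i.val + 1) * (if alphaVec π i then 1 else 0)

/-- The code `C_n^e` of even permutations in the Tenengolts code `C_n` has minimum Hamming
distance at least 3. -/
theorem stmt12 (n : ℕ) (π σ : Equiv.Perm (Fin n))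
    (hπ : tSum π % n = 0) (hσ : tSum σ % n = 0)
    (hπe : Equiv.Perm.sign π = 1) (hσe : Equiv.Perm.sign σ = 1) (hne : π ≠ σ) :
    3 ≤ hammingDist ⇑π ⇑σ := by
  by_contra hlt
  push_neg at hlt
  set s : Finset (Fin n) := Finset.univ.filter (fun x => π x ≠ σ x) with hs
  have hmem : ∀ x, x ∈ s ↔ π x ≠ σ x := by intro x; simp [hs]
  have hdist : hammingDist ⇑π ⇑σ = s.card := by
    simp [hammingDist, hs]
  rw [hdist] at hlt
  have hsne : s.Nonempty := by
    rcases Finset.eq_empty_or_nonempty s with h | h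
    · exfalso; apply hne; ext x
      by_contra hx
      have : x ∈ s := (hmem x).2 (fun hh => hx (congrArg Fin.val hh))
      simp [h] at this
    · exact h
  have hpos : 1 ≤ s.card := Finset.card_pos.mpr hsne
  interval_cases h : s.card
  · -- card = 1
    obtain ⟨a, ha⟩ := Finset.card_eq_one.mp h
    have haa : π a ≠ σ a := (hmem a).1 (by rw [ha]; simp)
    set b := σ.symm (π a) with hb
    have hσb : σ b = π a := σ.apply_symm_apply _
    by_cases hba : b = a
    · exact haa (by rw [← hba, hσb, hba])
    · have hbs : b ∉ s := by rw [ha]; simp [hba]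
      have : π b = σ b := by
        by_contra hc
        exact hbs ((hmem b).2 hc)
      have : π b = π a := by rw [this, hσb]
      exact hba (π.injective this)
  · -- card = 2
    obtain ⟨a, b, hab, hset⟩ := Finset.card_eq_two.mp h
    have haa : π a ≠ σ a := (hmem a).1 (by rw [hset]; simp)
    have hbb : π b ≠ σ b := (hmem b).1 (by rw [hset]; simp)
    have hout : ∀ x, x ≠ a → x ≠ b → π x = σ x := by
      intro x hxa hxb
      by_contra hc
      have : x ∈ s := (hmem x).2 hc
      rw [hset] at this
      simp [hxa, hxb] at this
    have h1 : σ b = π a := by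
      set c := σ.symm (π a) with hc
      have hσc : σ c = π a := σ.apply_symm_apply _
      have hca : c ≠ a := by intro hh; exact haa (by rw [← hh, hσc, hh])
      by_cases hcb : c = b
      · rw [← hcb, hσc]
      · exact absurd (π.injective ((hout c hca hcb).trans hσc)) hca
    have h2 : σ a = π b := by
      set c := σ.symm (π b) with hc
      have hσc : σ c = π b := σ.apply_symm_apply _
      have hcb : c ≠ b := by intro hh; exact hbb (by rw [← hh, hσc, hh])
      by_cases hca : c = a
      · rw [← hca, hσc]
      · exact absurd (π.injective ((hout c hca hcb).trans hσc)) hcb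
    have hσeq : σ = π * Equiv.swap a b := by
      ext x
      simp only [Equiv.Perm.mul_apply]
      by_cases hxa : x = a
      · subst hxa; rw [Equiv.swap_apply_left, h2]
      · by_cases hxb : x = b
        · subst hxb; rw [Equiv.swap_apply_right, h1]
        · rw [Equiv.swap_apply_of_ne_of_ne hxa hxb, hout x hxa hxb]
    rw [hσeq, Equiv.Perm.sign_mul, Equiv.Perm.sign_swap hab, hπe] at hσe
    simp at hσe
end
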